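/- Let d ≥ 4 and let V = ℚ_p^d with basis e₁, …, e_d. Let U ≤ ⋀²V be the span of all e_k ∧ e_l with 1 ≤ k < l ≤ d such that not both k and l lie in {1,2,3,4}, and set x = e₁ ∧ e₂ + e₃ ∧ e₄. Then the subspace ⟨x⟩ ⊕ U is not spanned by decomposables, and consequently every subspace S ≤ ⋀²V satisfying S + U = ⟨x⟩ ⊕ U is not spanned by decomposables. -/

import Mathlib

open Module

noncomputable section

variable (K : Type*) [CommRing K] (V : Type*) [AddCommGroup V] [Module K V]

/-- The set of decomposable elements of the exterior square, viewed inside the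
exterior algebra: elements of the form `v ∧ w`. -/
def DecompSet : Set (ExteriorAlgebra K V) :=
  {x | ∃ v w : V, x = ExteriorAlgebra.ι K v * ExteriorAlgebra.ι K w}

/-- The second exterior power `⋀² V`, realised as the span of all decomposable
wedges inside the exterior algebra. -/
def grade2 : Submodule K (ExteriorAlgebra K V) := Submodule.span K (DecompSet K V)

/-- A subspace `L ≤ ⋀² V` is spanned by decomposables if it equals the span of the
set of decomposable elements contained in it. -/
def SpannedByDecomposables (L : Submodule K (ExteriorAlgebra K V)) : Prop :=
  L = Submodule.span K ((L : Set (ExteriorAlgebra K V)) ∩ DecompSet K V)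

set_option maxHeartbeats 2000000 in
/-- let `d ≥ 4`, `V = ℚ_p^d` with standard basis `e₁, …, e_d`
(indexed by `Fin d`, so "`k, l` not both in `{1,2,3,4}`" becomes "not both
indices `< 4`"), let `U ≤ ⋀²V` be the span of the `e_k ∧ e_l` with `k < l` not
both lying among the first four basis vectors, and `x = e₁ ∧ e₂ + e₃ ∧ e₄`.
Then `⟨x⟩ ⊕ U` is not spanned by decomposables, and consequently every subspace
`S ≤ ⋀²V` with `S + U = ⟨x⟩ ⊕ U` is not spanned by decomposables. -/
theorem stmt17 (p : ℕ) [Fact p.Prime] (d : ℕ) (hd : 4 ≤ d)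
    (e : Fin d → (Fin d → ℚ_[p])) (he : ∀ k, e k = Pi.single k (1 : ℚ_[p]))
    (U : Submodule ℚ_[p] (ExteriorAlgebra ℚ_[p] (Fin d → ℚ_[p])))
    (hU : U = Submodule.span ℚ_[p]
      {x | ∃ k l : Fin d, k < l ∧ ¬((k : ℕ) < 4 ∧ (l : ℕ) < 4) ∧
        x = ExteriorAlgebra.ι ℚ_[p] (e k) * ExteriorAlgebra.ι ℚ_[p] (e l)})
    (x : ExteriorAlgebra ℚ_[p] (Fin d → ℚ_[p]))
    (hx : x = ExteriorAlgebra.ι ℚ_[p] (e ⟨0, by omega⟩) *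
          ExteriorAlgebra.ι ℚ_[p] (e ⟨1, by omega⟩) +
        ExteriorAlgebra.ι ℚ_[p] (e ⟨2, by omega⟩) *
          ExteriorAlgebra.ι ℚ_[p] (e ⟨3, by omega⟩)) :
    ¬ SpannedByDecomposables ℚ_[p] (Fin d → ℚ_[p])
        (Submodule.span ℚ_[p] {x} ⊔ U) ∧
      ∀ S : Submodule ℚ_[p] (ExteriorAlgebra ℚ_[p] (Fin d → ℚ_[p])),
        S ≤ grade2 ℚ_[p] (Fin d → ℚ_[p]) →
        S ⊔ U = Submodule.span ℚ_[p] {x} ⊔ U →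
        ¬ SpannedByDecomposables ℚ_[p] (Fin d → ℚ_[p]) S := by
  classical
  -- anticommutation and squares of decomposables
  have hswap : ∀ v w : Fin d → ℚ_[p],
      ExteriorAlgebra.ι ℚ_[p] w * ExteriorAlgebra.ι ℚ_[p] v
        = -(ExteriorAlgebra.ι ℚ_[p] v * ExteriorAlgebra.ι ℚ_[p] w) := fun v w =>
    eq_neg_of_add_eq_zero_left (ExteriorAlgebra.ι_add_mul_swap w v)
  have hsq : ∀ v w : Fin d → ℚ_[p],
      (ExteriorAlgebra.ι ℚ_[p] v * ExteriorAlgebra.ι ℚ_[p] w) *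
        (ExteriorAlgebra.ι ℚ_[p] v * ExteriorAlgebra.ι ℚ_[p] w) = 0 := by
    intro v w
    have h1 : (ExteriorAlgebra.ι ℚ_[p] v * ExteriorAlgebra.ι ℚ_[p] w) *
        (ExteriorAlgebra.ι ℚ_[p] v * ExteriorAlgebra.ι ℚ_[p] w)
        = ExteriorAlgebra.ι ℚ_[p] v *
          (ExteriorAlgebra.ι ℚ_[p] w * ExteriorAlgebra.ι ℚ_[p] v) *
            ExteriorAlgebra.ι ℚ_[p] w := by noncomm_ring
    rw [h1, hswap]
    simp only [mul_neg, neg_mul, ← mul_assoc]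
    rw [ExteriorAlgebra.ι_sq_zero]
    simp
  -- the projection onto the first four coordinates
  set P : (Fin d → ℚ_[p]) →ₗ[ℚ_[p]] (Fin d → ℚ_[p]) :=
    LinearMap.pi (fun i : Fin d => if (i : ℕ) < 4 then LinearMap.proj i else 0) with hP
  have hPapp : ∀ (v : Fin d → ℚ_[p]) (i : Fin d), P v i = if (i : ℕ) < 4 then v i else 0 := by
    intro v i
    simp only [hP, LinearMap.pi_apply]
    split <;> simp
  have hP1 : ∀ k : Fin d, (k : ℕ) < 4 → P (e k) = e k := by
    intro k hk
    funext i
    rw [hPapp]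
    by_cases hi : (i : ℕ) < 4
    · rw [if_pos hi]
    · rw [if_neg hi, he, Pi.single_apply, if_neg (by rintro rfl; exact hi hk)]
  have hP2 : ∀ k : Fin d, 4 ≤ (k : ℕ) → P (e k) = 0 := by
    intro k hk
    funext i
    rw [hPapp]
    by_cases hi : (i : ℕ) < 4
    · rw [if_pos hi, he, Pi.single_apply, if_neg (by rintro rfl; omega), Pi.zero_apply]
    · rw [if_neg hi, Pi.zero_apply]
  -- U lies in the kernel of the induced algebra map
  have hUle : U ≤ LinearMap.ker (ExteriorAlgebra.map P).toLinearMap := by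
    rw [hU, Submodule.span_le]
    rintro y ⟨k, l, hkl, hnot, rfl⟩
    have hkl' : (k : ℕ) < (l : ℕ) := hkl
    have hl : 4 ≤ (l : ℕ) := by
      by_contra h
      exact hnot ⟨by omega, by omega⟩
    simp [LinearMap.mem_ker, ExteriorAlgebra.map_apply_ι, hP2 l hl]
  have hπx : ExteriorAlgebra.map P x = x := by
    rw [hx, map_add, map_mul, map_mul, ExteriorAlgebra.map_apply_ι,
      ExteriorAlgebra.map_apply_ι, ExteriorAlgebra.map_apply_ι, ExteriorAlgebra.map_apply_ι,
      hP1 _ (by norm_num), hP1 _ (by norm_num), hP1 _ (by norm_num), hP1 _ (by norm_num)]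
  -- the degree-4 alternating functional
  set Q : (Fin d → ℚ_[p]) →ₗ[ℚ_[p]] (Fin 4 → ℚ_[p]) :=
    LinearMap.funLeft ℚ_[p] ℚ_[p] (Fin.castLE hd) with hQ
  set A : (Fin d → ℚ_[p]) [⋀^Fin 4]→ₗ[ℚ_[p]] ℚ_[p] :=
    (Matrix.detRowAlternating).compLinearMap Q with hA
  set f : ∀ i : ℕ, (Fin d → ℚ_[p]) [⋀^Fin i]→ₗ[ℚ_[p]] ℚ_[p] := fun i =>
    match i with
    | 4 => A
    | _ => 0
    with hf
  set F := ExteriorAlgebra.liftAlternating (R := ℚ_[p]) f with hFdef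
  have hF4 : ∀ v0 v1 v2 v3 : Fin d → ℚ_[p],
      F ((ExteriorAlgebra.ι ℚ_[p] v0 * ExteriorAlgebra.ι ℚ_[p] v1) *
          (ExteriorAlgebra.ι ℚ_[p] v2 * ExteriorAlgebra.ι ℚ_[p] v3)) =
        Matrix.det (Matrix.of fun i j : Fin 4 => (![v0, v1, v2, v3] i) (Fin.castLE hd j)) := by
    intro v0 v1 v2 v3
    have h1 : (ExteriorAlgebra.ι ℚ_[p] v0 * ExteriorAlgebra.ι ℚ_[p] v1) *
          (ExteriorAlgebra.ι ℚ_[p] v2 * ExteriorAlgebra.ι ℚ_[p] v3)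
        = ExteriorAlgebra.ιMulti ℚ_[p] 4 ![v0, v1, v2, v3] := by
      rw [ExteriorAlgebra.ιMulti_apply]
      simp [List.ofFn_succ, mul_assoc]
    rw [h1, hFdef, ExteriorAlgebra.liftAlternating_apply_ιMulti]
    rfl
  have hmat1 : (Matrix.of fun i j : Fin 4 =>
      (![e ⟨0, by omega⟩, e ⟨1, by omega⟩, e ⟨2, by omega⟩, e ⟨3, by omega⟩] i)
        (Fin.castLE hd j)) = (1 : Matrix (Fin 4) (Fin 4) ℚ_[p]) := by
    ext i j
    fin_cases i <;> fin_cases j <;>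
      simp only [Matrix.of_apply, Matrix.cons_val'] <;> simp (config := { decide := true }) [he, Pi.single_apply, Matrix.one_apply, Fin.ext_iff,
        Matrix.vecHead, Matrix.vecTail]
  have hmat2 : Matrix.det (Matrix.of fun i j : Fin 4 =>
      (![e ⟨2, by omega⟩, e ⟨3, by omega⟩, e ⟨0, by omega⟩, e ⟨1, by omega⟩] i)
        (Fin.castLE hd j)) = 1 := by
    have h : (Matrix.of fun i j : Fin 4 =>
        (![e ⟨2, by omega⟩, e ⟨3, by omega⟩, e ⟨0, by omega⟩, e ⟨1, by omega⟩] i)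
          (Fin.castLE hd j))
        = !![0,0,1,0; 0,0,0,1; 1,0,0,0; 0,1,0,0] := by
      ext i j
      fin_cases i <;> fin_cases j <;>
        simp only [Matrix.of_apply, Matrix.cons_val'] <;> simp (config := { decide := true }) [he, Pi.single_apply, Fin.ext_iff,
          Matrix.vecHead, Matrix.vecTail]
    rw [h]
    simp [Matrix.det_succ_row_zero, Fin.sum_univ_succ]
    rfl
  -- F (x * x) = 2
  have hFxx : F (x * x) = 2 := by
    rw [hx, add_mul, mul_add, mul_add, hsq, hsq]
    rw [map_add, map_add, map_add, map_zero, hF4, hF4, hmat1, hmat2, Matrix.det_one]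
    norm_num
  -- x ∉ U
  have hxU : x ∉ U := by
    intro hmem
    have h0 : ExteriorAlgebra.map P x = 0 := hUle hmem
    rw [hπx] at h0
    rw [h0, mul_zero, map_zero] at hFxx
    norm_num at hFxx
  -- every decomposable element of span{x} ⊔ U lies in U
  have hkey : ((Submodule.span ℚ_[p] {x} ⊔ U :
        Submodule ℚ_[p] (ExteriorAlgebra ℚ_[p] (Fin d → ℚ_[p]))) :
        Set (ExteriorAlgebra ℚ_[p] (Fin d → ℚ_[p]))) ∩ DecompSet ℚ_[p] (Fin d → ℚ_[p])
      ⊆ (U : Set (ExteriorAlgebra ℚ_[p] (Fin d → ℚ_[p]))) := by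
    rintro y ⟨hyL, v, w, rfl⟩
    rcases Submodule.mem_sup.mp hyL with ⟨s, hs, u, hu, hy⟩
    rcases Submodule.mem_span_singleton.mp hs with ⟨a, rfl⟩
    have hπu : ExteriorAlgebra.map P u = 0 := hUle hu
    have hπy : ExteriorAlgebra.map P (ExteriorAlgebra.ι ℚ_[p] v * ExteriorAlgebra.ι ℚ_[p] w)
        = a • x := by
      rw [← hy, map_add, map_smul, hπx, hπu, add_zero]
    have hdecomp : ExteriorAlgebra.map P (ExteriorAlgebra.ι ℚ_[p] v * ExteriorAlgebra.ι ℚ_[p] w)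
        = ExteriorAlgebra.ι ℚ_[p] (P v) * ExteriorAlgebra.ι ℚ_[p] (P w) := by
      rw [map_mul, ExteriorAlgebra.map_apply_ι, ExteriorAlgebra.map_apply_ι]
    have h2 : (a • x) * (a • x) = 0 := by
      rw [← hπy, hdecomp]; exact hsq _ _
    have ha : a = 0 := by
      have h3 := congrArg F h2
      rw [map_zero, smul_mul_smul_comm, map_smul, hFxx, smul_eq_mul] at h3
      rcases mul_eq_zero.mp h3 with h | h
      · exact mul_self_eq_zero.mp h
      · exact absurd h two_ne_zero
    rw [SetLike.mem_coe, ← hy, ha, zero_smul, zero_add]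
    exact hu
  have hxL : x ∈ Submodule.span ℚ_[p] {x} ⊔ U :=
    Submodule.mem_sup_left (Submodule.mem_span_singleton_self x)
  constructor
  · intro hsp
    have hle : Submodule.span ℚ_[p] {x} ⊔ U ≤ U := by
      rw [show Submodule.span ℚ_[p] {x} ⊔ U = _ from hsp]
      exact Submodule.span_le.mpr hkey
    exact hxU (hle hxL)
  · intro S _ hSU hsp
    have hSL : S ≤ Submodule.span ℚ_[p] {x} ⊔ U := hSU ▸ le_sup_left
    have hSU' : S ≤ U := by
      rw [show S = _ from hsp]
      refine Submodule.span_le.mpr (Set.Subset.trans ?_ hkey)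
      exact Set.inter_subset_inter_left _ hSL
    have hle : Submodule.span ℚ_[p] {x} ⊔ U ≤ U := hSU ▸ sup_le hSU' le_rfl
    exact hxU (hle hxL)

end
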